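/- Define w_n = b·TM_{2n-8}·complement(TM_{2n-6})·complement(TM_{2n-6})' for n ≥ 5. Then for every n ≥ 5, there exist strings x, y, z such that w_n = x·a·y and w_{n+1} = x·b·z; consequently w_n ≺ w_{n+1} lexicographically. -/

import Mathlib

/-- Alphabet {a,b} with a = false, b = true, a < b. -/
abbrev Letter := Bool

/-- Lexicographic order (proper prefixes are smaller). -/
def lexlt (x y : List Bool) : Prop := List.Lex (· < ·) x y

/-- Fibonacci words: F 0 = b, F 1 = a, F (k+2) = F (k+1) ++ F k. -/
def Fib : ℕ → List Bool
  | 0 => [true]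
  | 1 => [false]
  | (k+2) => Fib (k+1) ++ Fib k

/-- bitwise complement -/
def comp (w : List Bool) : List Bool := w.map (fun c => !c)

/-- Thue-Morse words: TM 0 = a, TM (k+1) = TM k ++ comp (TM k). -/
def TM : ℕ → List Bool
  | 0 => [false]
  | (k+1) => TM k ++ comp (TM k)

/-- Fueled Nyldon predicate: a string of length 1 is Nyldon; a longer string is
Nyldon iff it admits no factorization into ≥ 2 Nyldon words in lexicographically
non-decreasing order. -/
def NyldonAux : ℕ → List Bool → Prop
  | 0, _ => False
  | (n+1), w =>
    w.length = 1 ∨ (1 < w.length ∧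
      ¬ ∃ fs : List (List Bool), 2 ≤ fs.length ∧ fs.flatten = w ∧
        fs.Chain' lexlt ∧ ∀ u ∈ fs, NyldonAux n u)

def Nyldon (w : List Bool) : Prop := NyldonAux w.length w

/-- H k = Fib k with its first letter removed. -/
def H (k : ℕ) : List Bool := (Fib k).tail

/-- s is the longest Nyldon proper suffix of w. -/
def IsLnps (w s : List Bool) : Prop :=
  s <:+ w ∧ s ≠ w ∧ Nyldon s ∧
    ∀ t : List Bool, t <:+ w → t ≠ w → Nyldon t → t.length ≤ s.length

/-- Thue-Morse morphism: τ(a)=ab, τ(b)=ba. -/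
def tau (w : List Bool) : List Bool :=
  w.flatMap (fun c => if c then [true, false] else [false, true])

/-- The sequence w_n: w_1=a, w_2=b, w_3=ba, w_4=baabbaa,
w_n = b·TM_{2n-8}·comp(TM_{2n-6})·comp(TM_{2n-6})' for n ≥ 5. -/
def wseq : ℕ → List Bool
  | 0 => []
  | 1 => [false]
  | 2 => [true]
  | 3 => [true, false]
  | 4 => [true, false, false, true, true, false, false]
  | (n+5) => true :: (TM (2*n+2) ++ comp (TM (2*n+4)) ++ (comp (TM (2*n+4))).dropLast)

/-- The twelve words t_i(k). -/
def tword : ℕ → ℕ → List Bool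
  | 1, k => true :: (TM (2*k+1)).dropLast
  | 2, k => true :: TM (2*k+1)
  | 3, k => true :: (TM (2*k+1) ++ (comp (TM (2*k))).dropLast)
  | 4, k => true :: TM (2*k)
  | 5, k => true :: (TM (2*k) ++ TM (2*k-1) ++ (comp (TM (2*k-2))).dropLast)
  | 6, k => true :: (TM (2*k) ++ (TM (2*k+1)).dropLast)
  | 7, k => true :: (TM (2*k) ++ TM (2*k+1))
  | 8, k => true :: (TM (2*k) ++ TM (2*k+1) ++ (comp (TM (2*k))).dropLast)
  | 9, k => true :: (TM (2*k) ++ (comp (TM (2*k+2))).dropLast)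
  | 10, k => true :: (TM (2*k) ++ comp (TM (2*k+2)))
  | 11, k => true :: (TM (2*k) ++ TM (2*k+1) ++ (comp (TM (2*k+2))).dropLast)
  | 12, k => true :: (TM (2*k) ++ comp (TM (2*k+2)) ++ (comp (TM (2*k+2))).dropLast)
  | _, _ => []


lemma comp_append (u v : List Bool) : comp (u ++ v) = comp u ++ comp v := by
  simp [comp]

lemma comp_comp (w : List Bool) : comp (comp w) = w := by
  induction w with
  | nil => rfl
  | cons a w ih => simp [comp] at ih ⊢; exact ih

lemma tm_head : ∀ k, ∃ t, TM k = false :: t := by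
  intro k
  induction k with
  | zero => exact ⟨[], rfl⟩
  | succ k ih =>
    obtain ⟨t, ht⟩ := ih
    exact ⟨t ++ comp (TM k), by simp [TM, ht]⟩

lemma lex_mid (x y z : List Bool) :
    List.Lex (· < ·) (x ++ false :: y) (x ++ true :: z) := by
  induction x with
  | nil => exact List.Lex.rel (by decide)
  | cons a x ih => exact List.Lex.cons ih

theorem stmt16 : ∀ n : ℕ, 5 ≤ n →
    (∃ x y z : List Bool,
      wseq n = x ++ [false] ++ y ∧ wseq (n+1) = x ++ [true] ++ z) ∧
    lexlt (wseq n) (wseq (n+1)) := by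
  intro n hn
  obtain ⟨m, rfl⟩ : ∃ m, n = m + 5 := ⟨n - 5, by omega⟩
  obtain ⟨t, ht⟩ := tm_head (2*m+2)
  have h4 : TM (2*m+4) = TM (2*m+2) ++ comp (TM (2*m+2)) ++
      (comp (TM (2*m+2)) ++ TM (2*m+2)) := by
    have : TM (2*m+4) = TM (2*m+3) ++ comp (TM (2*m+3)) := rfl
    rw [this, show TM (2*m+3) = TM (2*m+2) ++ comp (TM (2*m+2)) from rfl,
      comp_append, comp_comp]
  have hc4 : comp (TM (2*m+4)) = comp (TM (2*m+2)) ++ TM (2*m+2) ++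
      (TM (2*m+2) ++ comp (TM (2*m+2))) := by
    rw [h4, comp_append, comp_append, comp_append, comp_comp]
  have hct : comp (TM (2*m+2)) = true :: comp t := by rw [ht]; rfl
  have hw1 : wseq (m+5) = (true :: (TM (2*m+2) ++ comp (TM (2*m+2)))) ++ [false] ++
      (t ++ TM (2*m+2) ++ comp (TM (2*m+2)) ++ (comp (TM (2*m+4))).dropLast) := by
    show true :: (TM (2*m+2) ++ comp (TM (2*m+4)) ++ (comp (TM (2*m+4))).dropLast) = _
    rw [hc4]
    conv_lhs => rw [ht]
    simp [List.append_assoc, ht]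
  have hw2 : wseq (m+5+1) = (true :: (TM (2*m+2) ++ comp (TM (2*m+2)))) ++ [true] ++
      (comp t ++ TM (2*m+2) ++ comp (TM (2*(m+1)+4)) ++ (comp (TM (2*(m+1)+4))).dropLast) := by
    show true :: (TM (2*(m+1)+2) ++ comp (TM (2*(m+1)+4)) ++ (comp (TM (2*(m+1)+4))).dropLast) = _
    rw [show 2*(m+1)+2 = 2*m+4 from by ring, h4]
    conv_lhs => rw [hct]
    simp [List.append_assoc, hct]
  refine ⟨⟨_, _, _, hw1, hw2⟩, ?_⟩
  rw [hw1, hw2]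
  simp only [List.append_assoc, List.singleton_append]
  exact lex_mid _ _ _
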